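/- For all t in (0,1], the function φ(t) := (1/t²)·D((1-t)/2 ∥ 1/2) is nondecreasing, where D(a∥b) = a·log(a/b) + (1-a)·log((1-a)/(1-b)) is the binary relative entropy (base 2). Equivalently, for any 0 < t ≤ c ≤ 1, 1 - H((1-t)/2) ≤ (1 - H((1-c)/2))·(t/c)², where H is the binary entropy function. -/

import Mathlib

open Real Set

noncomputable def binH (a : ℝ) : ℝ := -(a * Real.logb 2 a) - (1 - a) * Real.logb 2 (1 - a)

noncomputable def Fent (t : ℝ) : ℝ := ((1 - t) * Real.log (1 - t) + (1 + t) * Real.log (1 + t)) / 2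

noncomputable def Fd (t : ℝ) : ℝ := (Real.log (1 + t) - Real.log (1 - t)) / 2

noncomputable def Aent (t : ℝ) : ℝ := t / (1 - t ^ 2) - Fd t

noncomputable def Psi (t : ℝ) : ℝ := t * Fd t - 2 * Fent t

lemma Fent_cont : Continuous Fent := by
  have h1 : Continuous fun t : ℝ => (1 - t) * Real.log (1 - t) :=
    Real.continuous_mul_log.comp (by continuity)
  have h2 : Continuous fun t : ℝ => (1 + t) * Real.log (1 + t) :=
    Real.continuous_mul_log.comp (by continuity)
  exact (h1.add h2).div_const 2

lemma hasDerivAt_Fent {t : ℝ} (h1 : -1 < t) (h2 : t < 1) : HasDerivAt Fent (Fd t) t := by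
  have hm : (0:ℝ) < 1 - t := by linarith
  have hp : (0:ℝ) < 1 + t := by linarith
  have d1 : HasDerivAt (fun t : ℝ => (1 - t) * Real.log (1 - t))
      ((-1) * Real.log (1 - t) + (1 - t) * ((-1) / (1 - t))) t := by
    have hl : HasDerivAt (fun t : ℝ => Real.log (1 - t)) ((-1) / (1 - t)) t := by
      have := (Real.hasDerivAt_log hm.ne').comp t ((hasDerivAt_id t).const_sub 1)
      simpa [div_eq_mul_inv, mul_comm, Function.comp_def] using this
    exact ((hasDerivAt_id t).const_sub 1).mul hl
  have d2 : HasDerivAt (fun t : ℝ => (1 + t) * Real.log (1 + t))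
      (1 * Real.log (1 + t) + (1 + t) * (1 / (1 + t))) t := by
    have hl : HasDerivAt (fun t : ℝ => Real.log (1 + t)) (1 / (1 + t)) t := by
      have := (Real.hasDerivAt_log hp.ne').comp t ((hasDerivAt_id t).const_add 1)
      simpa [div_eq_mul_inv, mul_comm, Function.comp_def] using this
    exact ((hasDerivAt_id t).const_add 1).mul hl
  have := (d1.add d2).div_const 2
  refine this.congr_deriv ?_
  field_simp [Fd]
  unfold Fd
  ring

lemma hasDerivAt_Fd {t : ℝ} (h1 : -1 < t) (h2 : t < 1) :
    HasDerivAt Fd (1 / (1 - t ^ 2)) t := by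
  have hm : (0:ℝ) < 1 - t := by linarith
  have hp : (0:ℝ) < 1 + t := by linarith
  have hl1 : HasDerivAt (fun t : ℝ => Real.log (1 + t)) (1 / (1 + t)) t := by
    have := (Real.hasDerivAt_log hp.ne').comp t ((hasDerivAt_id t).const_add 1)
    simpa [div_eq_mul_inv, mul_comm, Function.comp_def] using this
  have hl2 : HasDerivAt (fun t : ℝ => Real.log (1 - t)) ((-1) / (1 - t)) t := by
    have := (Real.hasDerivAt_log hm.ne').comp t ((hasDerivAt_id t).const_sub 1)
    simpa [div_eq_mul_inv, mul_comm, Function.comp_def] using this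
  have := (hl1.sub hl2).div_const 2
  refine this.congr_deriv ?_
  have h12 : (1:ℝ) - t ^ 2 = (1 - t) * (1 + t) := by ring
  rw [h12]
  field_simp
  ring

lemma hasDerivAt_Aent {t : ℝ} (h1 : -1 < t) (h2 : t < 1) :
    HasDerivAt Aent (2 * t ^ 2 / (1 - t ^ 2) ^ 2) t := by
  have hne : (1:ℝ) - t ^ 2 ≠ 0 := by nlinarith
  have dq : HasDerivAt (fun t : ℝ => t / (1 - t ^ 2))
      ((1 * (1 - t ^ 2) - t * (0 - 2 * t)) / (1 - t ^ 2) ^ 2) t := by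
    have hd : HasDerivAt (fun t : ℝ => 1 - t ^ 2) (0 - 2 * t) t := by
      simpa using (hasDerivAt_pow 2 t).const_sub 1
    exact (hasDerivAt_id t).div hd hne
  have := dq.sub (hasDerivAt_Fd h1 h2)
  refine this.congr_deriv ?_
  field_simp
  ring

lemma hasDerivAt_Psi {t : ℝ} (h1 : -1 < t) (h2 : t < 1) :
    HasDerivAt Psi (Aent t) t := by
  have := ((hasDerivAt_id t).mul (hasDerivAt_Fd h1 h2)).sub
    ((hasDerivAt_Fent h1 h2).const_mul 2)
  refine this.congr_deriv ?_
  simp [Aent]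
  ring

lemma Aent_nonneg {t : ℝ} (h0 : 0 ≤ t) (h1 : t < 1) : 0 ≤ Aent t := by
  have hmono : MonotoneOn Aent (Ico 0 1) := by
    apply monotoneOn_of_deriv_nonneg (convex_Ico 0 1)
    · intro x hx
      exact (hasDerivAt_Aent (by linarith [hx.1]) hx.2).continuousAt.continuousWithinAt
    · intro x hx
      rw [interior_Ico] at hx
      exact (hasDerivAt_Aent (by linarith [hx.1]) hx.2).differentiableAt.differentiableWithinAt
    · intro x hx
      rw [interior_Ico] at hx
      rw [(hasDerivAt_Aent (by linarith [hx.1]) hx.2).deriv]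
      positivity
  have h00 : Aent 0 = 0 := by simp [Aent, Fd]
  have := hmono (by constructor <;> norm_num) (⟨h0, h1⟩ : t ∈ Ico (0:ℝ) 1) h0
  linarith [this]

lemma Psi_nonneg {t : ℝ} (h0 : 0 ≤ t) (h1 : t < 1) : 0 ≤ Psi t := by
  have hmono : MonotoneOn Psi (Ico 0 1) := by
    apply monotoneOn_of_deriv_nonneg (convex_Ico 0 1)
    · intro x hx
      exact (hasDerivAt_Psi (by linarith [hx.1]) hx.2).continuousAt.continuousWithinAt
    · intro x hx
      rw [interior_Ico] at hx
      exact (hasDerivAt_Psi (by linarith [hx.1]) hx.2).differentiableAt.differentiableWithinAt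
    · intro x hx
      rw [interior_Ico] at hx
      rw [(hasDerivAt_Psi (by linarith [hx.1]) hx.2).deriv]
      exact Aent_nonneg hx.1.le hx.2
  have h00 : Psi 0 = 0 := by simp [Psi, Fent, Fd]
  have := hmono (by constructor <;> norm_num) (⟨h0, h1⟩ : t ∈ Ico (0:ℝ) 1) h0
  linarith [this]

lemma G_mono : MonotoneOn (fun t => Fent t / t ^ 2) (Ioc 0 1) := by
  apply monotoneOn_of_deriv_nonneg (convex_Ioc 0 1)
  · exact Fent_cont.continuousOn.div (continuous_pow 2).continuousOn
      (fun x hx => pow_ne_zero 2 (ne_of_gt hx.1))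
  · intro x hx
    rw [interior_Ioc] at hx
    exact ((hasDerivAt_Fent (by linarith [hx.1]) hx.2).div (hasDerivAt_pow 2 x)
      (pow_ne_zero 2 (ne_of_gt hx.1))).differentiableAt.differentiableWithinAt
  · intro x hx
    rw [interior_Ioc] at hx
    have hx0 : (0:ℝ) < x := hx.1
    have hd := (hasDerivAt_Fent (by linarith) hx.2).div (hasDerivAt_pow 2 x)
      (pow_ne_zero 2 hx0.ne')
    rw [show (fun t => Fent t / t ^ 2) = (Fent / fun x => x ^ 2) from rfl, hd.deriv]
    apply div_nonneg _ (by positivity)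
    push_cast
    have := Psi_nonneg hx0.le hx.2
    simp only [Psi] at this
    nlinarith

lemma binH_eq {t : ℝ} (h0 : 0 ≤ t) (h1 : t ≤ 1) :
    1 - binH ((1 - t) / 2) = Fent t / Real.log 2 := by
  have hp : (0:ℝ) < 1 + t := by linarith
  have hlog2 : Real.log 2 ≠ 0 := (Real.log_pos (by norm_num)).ne'
  have e1 : (1 - t) / 2 * Real.log ((1 - t) / 2) = (1 - t) / 2 * (Real.log (1 - t) - Real.log 2) := by
    rcases eq_or_lt_of_le h1 with h | h
    · simp [← h]
    · rw [Real.log_div (by linarith) (by norm_num)]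
  have e2 : Real.log (1 - (1 - t) / 2) = Real.log (1 + t) - Real.log 2 := by
    have : 1 - (1 - t) / 2 = (1 + t) / 2 := by ring
    rw [this, Real.log_div hp.ne' (by norm_num)]
  rw [binH, Real.logb, Real.logb, e2, ← mul_div_assoc, e1]
  have h2 : (0:ℝ) < Real.log 2 := Real.log_pos (by norm_num)
  field_simp [Fent]
  unfold Fent
  ring

theorem stmt_0 (t c : ℝ) (ht : 0 < t) (htc : t ≤ c) (hc : c ≤ 1) :
    1 - binH ((1 - t) / 2) ≤ (1 - binH ((1 - c) / 2)) * (t / c) ^ 2 := by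
  have htc1 : t ≤ 1 := le_trans htc hc
  have hc0 : 0 < c := lt_of_lt_of_le ht htc
  rw [binH_eq ht.le htc1, binH_eq hc0.le hc]
  have hG := G_mono (⟨ht, htc1⟩ : t ∈ Ioc (0:ℝ) 1) (⟨hc0, hc⟩ : c ∈ Ioc (0:ℝ) 1) htc
  have h2 : (0:ℝ) < Real.log 2 := Real.log_pos (by norm_num)
  have key : Fent t / t ^ 2 ≤ Fent c / c ^ 2 := hG
  have ht2 : (0:ℝ) < t ^ 2 := by positivity
  have hc2 : (0:ℝ) < c ^ 2 := by positivity
  rw [div_le_div_iff₀ ht2 hc2] at key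
  rw [div_pow, show Fent c / Real.log 2 * (t ^ 2 / c ^ 2) = Fent c * t ^ 2 / (Real.log 2 * c ^ 2) by
    rw [div_mul_div_comm]]
  rw [div_le_div_iff₀ h2 (by positivity)]
  nlinarith [key, h2]
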